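/- Let f : [a,b] → [0,∞) be a monotonically increasing probability density function on [a,b] (so ∫_a^b f(t) dt = 1), and let E(X) = ∫_a^b t·f(t) dt. Then (1/8)·[ f₊((a+b)/2) − f₋((a+b)/2) ]·(b−a)² + (a+b)/2 ≤ E(X) ≤ (1/8)·[ f₋(b) − f₊(a) ]·(b−a)² + (a+b)/2. -/

import Mathlib

open MeasureTheory Set intervalIntegral

/-- **Midpoint bounds for the expectation of a random variable with monotone
density** (Corollary after Theorem 4.1): with `fpm`, `fmm` the right and left
limits of `f` at `(a+b)/2`, `fpa` the right limit at `a` and `fmb` the left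
limit at `b`,
`(1/8)[f₊((a+b)/2) − f₋((a+b)/2)](b−a)² + (a+b)/2 ≤ E(X)
  ≤ (1/8)[f₋(b) − f₊(a)](b−a)² + (a+b)/2`. -/
theorem expectation_midpoint_bounds_monotone_pdf
    (a b : ℝ) (hab : a < b) (f : ℝ → ℝ)
    (hmono : MonotoneOn f (Set.Icc a b))
    (hnonneg : ∀ t ∈ Set.Icc a b, 0 ≤ f t)
    (hpdf : (∫ t in a..b, f t) = 1)
    (fpm fmm fpa fmb : ℝ)
    (hfpm : Filter.Tendsto f (nhdsWithin ((a + b) / 2) (Set.Ioi ((a + b) / 2)))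
      (nhds fpm))
    (hfmm : Filter.Tendsto f (nhdsWithin ((a + b) / 2) (Set.Iio ((a + b) / 2)))
      (nhds fmm))
    (hfpa : Filter.Tendsto f (nhdsWithin a (Set.Ioi a)) (nhds fpa))
    (hfmb : Filter.Tendsto f (nhdsWithin b (Set.Iio b)) (nhds fmb)) :
    (1 / 8) * (fpm - fmm) * (b - a) ^ 2 + (a + b) / 2 ≤
        (∫ t in a..b, t * f t) ∧
      (∫ t in a..b, t * f t) ≤
        (1 / 8) * (fmb - fpa) * (b - a) ^ 2 + (a + b) / 2 := by
  set m : ℝ := (a + b) / 2 with hm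
  have ham : a < m := by rw [hm]; linarith
  have hmb : m < b := by rw [hm]; linarith
  -- one-sided limit inequalities
  have h1 : ∀ t ∈ Ioc m b, fpm ≤ f t := by
    intro t ht
    refine le_of_tendsto hfpm ?_
    filter_upwards [Ioo_mem_nhdsGT ht.1] with s hs
    exact hmono ⟨ham.le.trans hs.1.le, hs.2.le.trans ht.2⟩
      ⟨ham.le.trans ht.1.le, ht.2⟩ hs.2.le
  have h2 : ∀ t ∈ Ico a m, f t ≤ fmm := by
    intro t ht
    refine ge_of_tendsto hfmm ?_
    filter_upwards [Ioo_mem_nhdsLT ht.2] with s hs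
    exact hmono ⟨ht.1, ht.2.le.trans hmb.le⟩
      ⟨ht.1.trans hs.1.le, hs.2.le.trans hmb.le⟩ hs.1.le
  have h3 : ∀ t ∈ Ioc a b, fpa ≤ f t := by
    intro t ht
    refine le_of_tendsto hfpa ?_
    filter_upwards [Ioo_mem_nhdsGT ht.1] with s hs
    exact hmono ⟨hs.1.le, hs.2.le.trans ht.2⟩ ⟨ht.1.le, ht.2⟩ hs.2.le
  have h4 : ∀ t ∈ Ico a b, f t ≤ fmb := by
    intro t ht
    refine ge_of_tendsto hfmb ?_
    filter_upwards [Ioo_mem_nhdsLT ht.2] with s hs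
    exact hmono ⟨ht.1, ht.2.le⟩ ⟨ht.1.trans hs.1.le, hs.2.le⟩ hs.1.le
  -- integrabilities
  have hfI : IntervalIntegrable f volume a b := by
    apply MonotoneOn.intervalIntegrable
    rwa [uIcc_of_le hab.le]
  have hfIam : IntervalIntegrable f volume a m := by
    apply MonotoneOn.intervalIntegrable
    rw [uIcc_of_le ham.le]
    exact hmono.mono (Icc_subset_Icc le_rfl hmb.le)
  have hfImb : IntervalIntegrable f volume m b := by
    apply MonotoneOn.intervalIntegrable
    rw [uIcc_of_le hmb.le]
    exact hmono.mono (Icc_subset_Icc ham.le le_rfl)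
  have hgImb : IntervalIntegrable (fun x => f (a + b - x)) volume m b := by
    apply AntitoneOn.intervalIntegrable
    rw [uIcc_of_le hmb.le]
    intro x hx y hy hxy
    have hxm : a + b - x ∈ Icc a b := by
      constructor <;> [linarith [hx.2]; (rw [hm] at hx; linarith [hx.1])]
    have hym : a + b - y ∈ Icc a b := by
      constructor <;> [linarith [hy.2]; (rw [hm] at hy; linarith [hy.1])]
    exact hmono hym hxm (by linarith)
  have hcont1 : ContinuousOn (fun x : ℝ => x - m) (Set.uIcc m b) :=
    (continuous_id.sub continuous_const).continuousOn
  have hA : IntervalIntegrable (fun x => (x - m) * f x) volume m b :=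
    hfImb.continuousOn_mul hcont1
  have hB : IntervalIntegrable (fun x => (x - m) * f (a + b - x)) volume m b :=
    hgImb.continuousOn_mul hcont1
  have hC : IntervalIntegrable (fun x => (x - m) * (f x - f (a + b - x))) volume m b :=
    (hfImb.sub hgImb).continuousOn_mul hcont1
  have hAam : IntervalIntegrable (fun x => (x - m) * f x) volume a m :=
    hfIam.continuousOn_mul (continuous_id.sub continuous_const).continuousOn
  have htfI : IntervalIntegrable (fun t => t * f t) volume a b :=
    hfI.continuousOn_mul continuousOn_id
  -- key identity
  have key : (∫ t in a..b, t * f t) - m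
      = ∫ x in m..b, (x - m) * (f x - f (a + b - x)) := by
    have e1 : (∫ t in a..b, (t - m) * f t)
        = (∫ t in a..b, t * f t) - m * ∫ t in a..b, f t := by
      rw [← intervalIntegral.integral_const_mul,
        ← intervalIntegral.integral_sub htfI (hfI.const_mul m)]
      congr 1; ext t; ring
    have e2 : (∫ t in a..m, (t - m) * f t) + (∫ t in m..b, (t - m) * f t)
        = ∫ t in a..b, (t - m) * f t :=
      intervalIntegral.integral_add_adjacent_intervals hAam hA
    have e3 : (∫ t in a..m, (t - m) * f t)
        = ∫ x in m..b, -((x - m) * f (a + b - x)) := by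
      have := intervalIntegral.integral_comp_sub_left
        (fun t => (t - m) * f t) (a + b) (a := m) (b := b)
      have hb1 : a + b - b = a := by ring
      have hb2 : a + b - m = m := by rw [hm]; ring
      rw [hb1, hb2] at this
      rw [← this]
      congr 1; ext x
      have : a + b - x - m = -(x - m) := by rw [hm]; ring
      rw [this]; ring
    have e4 : (∫ x in m..b, (x - m) * f x) - (∫ x in m..b, (x - m) * f (a + b - x))
        = ∫ x in m..b, (x - m) * (f x - f (a + b - x)) := by
      rw [← intervalIntegral.integral_sub hA hB]
      congr 1; ext x; ring
    rw [intervalIntegral.integral_neg] at e3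
    rw [e1, hpdf, mul_one] at e2
    linarith [e2, e3, e4]
  -- constant integral computation
  have hconst : ∀ c : ℝ, (∫ x in m..b, (x - m) * c) = (1 / 8) * c * (b - a) ^ 2 := by
    intro c
    have : (∫ x in m..b, (x - m) * c)
        = (∫ x in m..b, x) * c - (∫ x in m..b, (m : ℝ)) * c := by
      rw [← intervalIntegral.integral_mul_const, ← intervalIntegral.integral_mul_const,
        ← intervalIntegral.integral_sub (intervalIntegrable_id.mul_const c)
          ((intervalIntegrable_const (c := m)).mul_const c)]
      congr 1; ext x; ring
    rw [this, integral_id, intervalIntegral.integral_const]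
    simp only [smul_eq_mul]
    rw [hm]; ring
  constructor
  · -- lower bound
    have hlow : (∫ x in m..b, (x - m) * (fpm - fmm))
        ≤ ∫ x in m..b, (x - m) * (f x - f (a + b - x)) := by
      refine intervalIntegral.integral_mono_on hmb.le
        (((continuous_id.sub continuous_const).mul continuous_const).intervalIntegrable _ _)
        hC ?_
      intro x hx
      rcases eq_or_lt_of_le hx.1 with h | h
      · simp [← h]
      · have hfx : fpm ≤ f x := h1 x ⟨h, hx.2⟩
        have hgx : f (a + b - x) ≤ fmm := by
          refine h2 _ ⟨by linarith [hx.2], ?_⟩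
          rw [hm] at h ⊢; linarith
        have : fpm - fmm ≤ f x - f (a + b - x) := by linarith
        nlinarith [sub_nonneg.2 hx.1]
    rw [hconst] at hlow
    linarith [key, hlow]
  · -- upper bound
    have hhigh : (∫ x in m..b, (x - m) * (f x - f (a + b - x)))
        ≤ ∫ x in m..b, (x - m) * (fmb - fpa) := by
      refine intervalIntegral.integral_mono_ae_restrict hmb.le hC
        (((continuous_id.sub continuous_const).mul continuous_const).intervalIntegrable _ _) ?_
      have hae : ∀ᵐ x ∂(volume.restrict (Icc m b)), x ≠ b := by
        refine ae_restrict_of_ae ?_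
        have hs : {x : ℝ | ¬ x ≠ b} = {b} := by ext x; simp
        rw [ae_iff, hs]
        exact measure_singleton b
      have hmem : ∀ᵐ x ∂(volume.restrict (Icc m b)), x ∈ Icc m b :=
        ae_restrict_mem measurableSet_Icc
      filter_upwards [hae, hmem] with x hxb hx
      rcases eq_or_lt_of_le hx.1 with h | h
      · simp [← h]
      · have hxb' : x < b := lt_of_le_of_ne hx.2 hxb
        have hfx : f x ≤ fmb := h4 x ⟨ham.le.trans hx.1, hxb'⟩
        have hgx : fpa ≤ f (a + b - x) := by
          refine h3 _ ⟨by linarith, by linarith [hx.1, ham.le]⟩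
        have : f x - f (a + b - x) ≤ fmb - fpa := by linarith
        nlinarith [sub_nonneg.2 hx.1]
    rw [hconst] at hhigh
    linarith [key, hhigh]
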